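/- Let X, Y be metric spaces, α ∈ (0,1), w a weight on X, and suppose there exists M > 0 such that for every x, y ∈ X there is a rectifiable curve γ joining them with ∫_γ w^{α−1} ≤ M·d_X(x,y)^α. Then a mapping f ∈ RO^K_w(X,Y) satisfies D*f(z) ≤ C_f·w(z)^{α−1} for all z ∈ X if and only if it satisfies d_Y(f(x),f(y)) ≤ C'_f·d_X(x,y)^α for all x, y ∈ X. Moreover one may take C'_f ≤ M·C_f in one direction and C_f ≤ (2K/α)·C'_f in the other. -/

import Mathlib

open Set Filter Metric ENNReal NNReal

/-- `D* f x`: upper dilation of `f` at `x` (0 at isolated points). -/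
noncomputable def Dstar {X Y : Type*} [MetricSpace X] [MetricSpace Y] (f : X → Y) (x : X) :
    ℝ≥0∞ :=
  Filter.limsup (fun y => edist (f x) (f y) / edist x y) (nhdsWithin x {x}ᶜ)

/-- A curve parametrized on `[0,1]` joining `x` to `y`. -/
def IsCurveFrom {X : Type*} [MetricSpace X] (γ : ℝ → X) (x y : X) : Prop :=
  ContinuousOn γ (Set.Icc 0 1) ∧ γ 0 = x ∧ γ 1 = y

/-- Rectifiability of a curve parametrized on `[0,1]`. -/
def RectifiableCurve {X : Type*} [MetricSpace X] (γ : ℝ → X) : Prop :=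
  eVariationOn γ (Set.Icc 0 1) ≠ ⊤

/-- `I` is the curve integral of `g` along `γ : [0,1] → X` (limit of Riemann sums with respect
to arclength). -/
def IsCurveIntegral {X : Type*} [MetricSpace X] (γ : ℝ → X) (g : X → ℝ) (I : ℝ) : Prop :=
  ∀ ε > 0, ∃ δ > 0, ∀ n : ℕ, ∀ t s : ℕ → ℝ,
    0 < n → t 0 = 0 → t n = 1 →
    (∀ i < n, t i < t (i + 1)) →
    (∀ i < n, t (i + 1) - t i < δ) →
    (∀ i < n, s i ∈ Set.Icc (t i) (t (i + 1))) →
    |I - ∑ i ∈ Finset.range n,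
        g (γ (s i)) * (eVariationOn γ (Set.Icc (t i) (t (i + 1)))).toReal| < ε

/-- The weighted distance `d_w`. -/
noncomputable def wDist {X : Type*} [MetricSpace X] (w : X → ℝ) (x y : X) : ℝ :=
  sInf {I | ∃ γ : ℝ → X, IsCurveFrom γ x y ∧ RectifiableCurve γ ∧ IsCurveIntegral γ w I}

/-- The inner (length) distance `d₁`. -/
noncomputable def innerDist {Y : Type*} [MetricSpace Y] (u v : Y) : ℝ :=
  sInf {L | ∃ δ : ℝ → Y, IsCurveFrom δ u v ∧ eVariationOn δ (Set.Icc 0 1) = ENNReal.ofReal L}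

/-- The class `RO^K_w(X,Y)` of regularly oscillating mappings. -/
def RegOsc {X Y : Type*} [MetricSpace X] [MetricSpace Y] (w : X → ℝ) (K : ℝ) (f : X → Y) :
    Prop :=
  (∀ x, Dstar f x ≠ ⊤) ∧
  (∀ x : X, ∀ r : ℝ, 0 < r → r < w x → Bornology.IsBounded (f '' Metric.ball x r)) ∧
  (∀ x : X, ∀ r : ℝ, 0 < r → r < w x →
    Dstar f x ≤ ENNReal.ofReal ((K / r) * ⨆ y : Metric.ball x r, dist (f x) (f y)))


lemma t_mono_aux (t : ℕ → ℝ) (n : ℕ) (h : ∀ i < n, t i < t (i + 1)) :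
    ∀ i j, i ≤ j → j ≤ n → t i ≤ t j := by
  intro i j hij hjn
  induction j with
  | zero => obtain rfl : i = 0 := Nat.le_zero.mp hij; exact le_rfl
  | succ k ih =>
    rcases Nat.lt_succ_iff_lt_or_eq.mp (Nat.lt_succ_of_le hij) with h' | rfl
    · exact le_trans (ih (Nat.lt_succ_iff.mp h') (by omega)) (h k (by omega)).le
    · exact le_rfl

lemma sum_eVar_aux {X : Type*} [MetricSpace X] (γ : ℝ → X) (t : ℕ → ℝ) (n : ℕ)
    (h : ∀ i < n, t i < t (i + 1)) :
    ∑ i ∈ Finset.range n, eVariationOn γ (Set.Icc (t i) (t (i + 1)))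
      = eVariationOn γ (Set.Icc (t 0) (t n)) := by
  induction n with
  | zero =>
    rw [Finset.sum_range_zero, Set.Icc_self]
    exact (eVariationOn.subsingleton γ Set.subsingleton_singleton).symm
  | succ n ih =>
    rw [Finset.sum_range_succ, ih (fun i hi => h i (by omega))]
    have h0n : t 0 ≤ t n := t_mono_aux t n (fun i hi => h i (by omega)) 0 n (Nat.zero_le _) le_rfl
    have hnn : t n ≤ t (n + 1) := (h n (by omega)).le
    have := eVariationOn.Icc_add_Icc γ (s := Set.univ) h0n hnn (Set.mem_univ _)
    simpa [Set.univ_inter] using this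


lemma cousin_aux (δg : ℝ → ℝ) (hδg : ∀ r, 0 < δg r) :
    ∃ n : ℕ, ∃ t s : ℕ → ℝ, 0 < n ∧ t 0 = 0 ∧ t n = 1 ∧
      (∀ i < n, t i < t (i + 1)) ∧
      (∀ i < n, s i ∈ Set.Icc (t i) (t (i + 1))) ∧
      (∀ i < n, Set.Icc (t i) (t (i + 1)) ⊆ Metric.ball (s i) (δg (s i))) := by
  classical
  set P : ℝ → Prop := fun T => ∃ n : ℕ, ∃ t s : ℕ → ℝ, 0 < n ∧ t 0 = 0 ∧ t n = T ∧
      (∀ i < n, t i < t (i + 1)) ∧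
      (∀ i < n, s i ∈ Set.Icc (t i) (t (i + 1))) ∧
      (∀ i < n, Set.Icc (t i) (t (i + 1)) ⊆ Metric.ball (s i) (δg (s i))) with hPdef
  have ext : ∀ T T' s₀, P T → T < T' → s₀ ∈ Set.Icc T T' →
      Set.Icc T T' ⊆ Metric.ball s₀ (δg s₀) → P T' := by
    rintro T T' s₀ ⟨n, t, s, hn, h0, hT, hinc, htag, hball⟩ hTT' hs₀ hsub
    have hne : ¬ (n + 1 ≤ n) := Nat.not_succ_le_self n
    refine ⟨n+1, fun i => if i ≤ n then t i else T', fun i => if i = n then s₀ else s i,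
      Nat.succ_pos n, by simpa using h0, by simp [hne], ?_, ?_, ?_⟩
    · intro i hi
      rcases Nat.lt_succ_iff_lt_or_eq.mp hi with h | rfl
      · simp only [if_pos (Nat.le_of_lt h), if_pos (Nat.succ_le_of_lt h)]
        exact hinc i h
      · simp only [if_pos le_rfl, if_neg hne]
        rw [hT]; exact hTT'
    · intro i hi
      rcases Nat.lt_succ_iff_lt_or_eq.mp hi with h | rfl
      · simp only [if_pos (Nat.le_of_lt h), if_pos (Nat.succ_le_of_lt h),
          if_neg (Nat.ne_of_lt h)]
        exact htag i h
      · simp only [if_pos le_rfl, if_pos rfl, if_neg hne]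
        rw [hT]; exact hs₀
    · intro i hi
      rcases Nat.lt_succ_iff_lt_or_eq.mp hi with h | rfl
      · simp only [if_pos (Nat.le_of_lt h), if_pos (Nat.succ_le_of_lt h),
          if_neg (Nat.ne_of_lt h)]
        exact hball i h
      · simp only [if_pos le_rfl, if_pos rfl, if_neg hne]
        rw [hT]; exact hsub
  set A : Set ℝ := {T | T ∈ Set.Icc (0:ℝ) 1 ∧ P T} with hAdef
  have hT₀ : min 1 (δg 0 / 2) ∈ A := by
    have hpos : (0:ℝ) < min 1 (δg 0 / 2) := lt_min one_pos (half_pos (hδg 0))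
    have hlt : min 1 (δg 0 / 2) < δg 0 := lt_of_le_of_lt (min_le_right _ _) (by linarith [hδg 0])
    refine ⟨⟨hpos.le, min_le_left _ _⟩, 1, fun i => if i = 0 then 0 else min 1 (δg 0 / 2),
      fun _ => 0, one_pos, by norm_num, by norm_num, ?_, ?_, ?_⟩
    · intro i hi; interval_cases i; simpa using hpos
    · intro i hi; interval_cases i
      simp only [if_pos rfl, if_neg one_ne_zero]
      exact ⟨le_rfl, hpos.le⟩
    · intro i hi; interval_cases i
      intro u hu
      simp only [if_pos rfl, if_neg one_ne_zero] at hu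
      rw [Metric.mem_ball, Real.dist_eq, sub_zero, abs_of_nonneg hu.1]
      exact lt_of_le_of_lt hu.2 hlt
  have hAne : A.Nonempty := ⟨_, hT₀⟩
  have hAbdd : BddAbove A := ⟨1, fun T hT => hT.1.2⟩
  set c := sSup A with hc
  have hcpos : 0 < c :=
    lt_of_lt_of_le (lt_min one_pos (half_pos (hδg 0))) (le_csSup hAbdd hT₀)
  have hc1 : c ≤ 1 := csSup_le hAne fun T hT => hT.1.2
  obtain ⟨T, hTA, hTgt⟩ : ∃ T ∈ A, c - δg c / 2 < T :=
    exists_lt_of_lt_csSup hAne (by linarith [hδg c])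
  by_cases hT1 : T = 1
  · subst hT1; exact hTA.2
  have hT1lt : T < 1 := lt_of_le_of_ne hTA.1.2 hT1
  have hTc : T ≤ c := le_csSup hAbdd hTA
  set T' := min 1 (c + δg c / 2) with hT'def
  have hTT' : T < T' := lt_min hT1lt (by linarith [hδg c])
  have hcT' : c ∈ Set.Icc T T' := ⟨hTc, le_min hc1 (by linarith [hδg c])⟩
  have hsub : Set.Icc T T' ⊆ Metric.ball c (δg c) := by
    intro u hu
    have h1 : T' ≤ c + δg c / 2 := min_le_right _ _
    rw [Metric.mem_ball, Real.dist_eq, abs_lt]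
    constructor
    · have := hu.1; linarith [hδg c]
    · have := hu.2; linarith [hδg c]
  have hP' : P T' := ext T T' c hTA.2 hTT' hcT' hsub
  have hT'A : T' ∈ A := ⟨⟨le_trans hTA.1.1 hTT'.le, min_le_left _ _⟩, hP'⟩
  have hT'c : T' ≤ c := le_csSup hAbdd hT'A
  have hceq : c = 1 := by
    by_contra h
    have hclt : c < 1 := lt_of_le_of_ne hc1 h
    have : c < T' := lt_min hclt (by linarith [hδg c])
    linarith
  have : T' = 1 := by rw [hT'def, hceq]; exact min_eq_left (by linarith [hδg 1])
  rw [this] at hP'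
  exact hP'


theorem hardy_littlewood_metric {X Y : Type*} [MetricSpace X] [MetricSpace Y]
    (α : ℝ) (hα : α ∈ Set.Ioo (0:ℝ) 1)
    (w : X → ℝ) (hwc : Continuous w) (hwpos : ∀ x, 0 < w x)
    (M K : ℝ) (hM : 0 < M) (hK : 0 < K)
    (hcurve : ∀ x y : X, ∃ γ : ℝ → X, ∃ I : ℝ, IsCurveFrom γ x y ∧ RectifiableCurve γ ∧
      IsCurveIntegral γ (fun z => w z ^ (α - 1)) I ∧ I ≤ M * dist x y ^ α)
    (f : X → Y) (hf : RegOsc w K f) :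
    (∀ C : ℝ, 0 ≤ C → (∀ z, Dstar f z ≤ ENNReal.ofReal (C * w z ^ (α - 1))) →
      ∀ x y, dist (f x) (f y) ≤ M * C * dist x y ^ α) ∧
    (∀ C' : ℝ, 0 ≤ C' → (∀ x y, dist (f x) (f y) ≤ C' * dist x y ^ α) →
      ∀ z, Dstar f z ≤ ENNReal.ofReal ((2 * K / α) * C' * w z ^ (α - 1))) := by
  classical
  constructor
  · -- Part 1
    intro C hC hD x y
    obtain ⟨γ, I, ⟨hγc, hγ0, hγ1⟩, hrect, hint', hI⟩ := hcurve x y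
    have hint := hint' -- IsCurveIntegral unfolds definitionally
    rw [IsCurveIntegral] at hint
    rw [RectifiableCurve] at hrect
    classical
    set g : X → ℝ := fun z => w z ^ (α - 1) with hg
    set L := (eVariationOn γ (Set.Icc (0:ℝ) 1)).toReal with hLdef
    have hL0 : 0 ≤ L := ENNReal.toReal_nonneg
    refine le_of_forall_pos_le_add fun ε' hε' => ?_
    set ε := ε' / (C + L + 1) with hεdef
    have hε : 0 < ε := by positivity
    -- local estimate around each point
    have key : ∀ p : X, ∃ ρ > 0, ∀ q : X, dist p q < ρ →
        dist (f p) (f q) ≤ (C * g p + ε) * dist p q := by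
      intro p
      have hgp : 0 < g p := Real.rpow_pos_of_pos (hwpos p) _
      have hlt : Dstar f p < ENNReal.ofReal (C * g p + ε) :=
        lt_of_le_of_lt (hD p)
          ((ENNReal.ofReal_lt_ofReal_iff (by positivity)).mpr (by simp [hg]; linarith))
      have hev : ∀ᶠ q in nhdsWithin p {p}ᶜ,
          edist (f p) (f q) / edist p q < ENNReal.ofReal (C * g p + ε) :=
        Filter.eventually_lt_of_limsup_lt hlt
      rw [Filter.Eventually, Metric.mem_nhdsWithin_iff] at hev
      obtain ⟨ρ, hρ0, hsub⟩ := hev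
      refine ⟨ρ, hρ0, fun q hq => ?_⟩
      rcases eq_or_ne q p with rfl | hqp
      · simp [dist_nonneg, mul_nonneg, hε.le]
      · have h2 : edist (f p) (f q) / edist p q < ENNReal.ofReal (C * g p + ε) :=
          hsub ⟨Metric.mem_ball'.mpr hq, hqp⟩
        have hne0 : edist p q ≠ 0 := (edist_pos.mpr (Ne.symm hqp)).ne'
        rw [ENNReal.div_lt_iff (Or.inl hne0) (Or.inl (edist_ne_top p q)),
          edist_dist, edist_dist, ← ENNReal.ofReal_mul (by positivity)] at h2
        exact ((ENNReal.ofReal_lt_ofReal_iff_of_nonneg dist_nonneg).mp h2).le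
    -- gauge on [0,1]
    have gauge : ∀ s ∈ Set.Icc (0:ℝ) 1, ∃ ρ' > 0, ∀ u ∈ Set.Icc (0:ℝ) 1, |u - s| < ρ' →
        dist (f (γ s)) (f (γ u)) ≤ (C * g (γ s) + ε) * dist (γ s) (γ u) := by
      intro s hs
      obtain ⟨ρ, hρ0, hkey⟩ := key (γ s)
      have hcont : ContinuousWithinAt γ (Set.Icc 0 1) s := hγc s hs
      rw [Metric.continuousWithinAt_iff] at hcont
      obtain ⟨ρ', hρ'0, hρ'⟩ := hcont ρ hρ0
      refine ⟨ρ', hρ'0, fun u hu hdist => ?_⟩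
      have h3 : dist (γ u) (γ s) < ρ := hρ' hu (by rwa [Real.dist_eq])
      exact hkey (γ u) (by rwa [dist_comm] at h3)
    choose! ρ hρpos hρ using gauge
    obtain ⟨δ, hδ, hRiem⟩ := hint ε hε
    obtain ⟨n, t, s, hn, ht0, htn, hinc, htag, hball⟩ :=
      cousin_aux (fun r => if r ∈ Set.Icc (0:ℝ) 1 then min (δ/2) (ρ r) else 1)
        (by
          intro r; split_ifs with h
          · exact lt_min (half_pos hδ) (hρpos r h)
          · exact one_pos)
    have hmono := t_mono_aux t n hinc
    have htmem : ∀ i ≤ n, t i ∈ Set.Icc (0:ℝ) 1 := fun i hi =>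
      ⟨ht0 ▸ hmono 0 i (Nat.zero_le _) hi, htn ▸ hmono i n hi le_rfl⟩
    have hsmem : ∀ i < n, s i ∈ Set.Icc (0:ℝ) 1 := fun i hi =>
      ⟨(htmem i hi.le).1.trans (htag i hi).1, (htag i hi).2.trans (htmem (i+1) hi).2⟩
    have hball' : ∀ i < n, Set.Icc (t i) (t (i+1)) ⊆ Metric.ball (s i) (min (δ/2) (ρ (s i))) := by
      intro i hi
      have := hball i hi
      rwa [if_pos (hsmem i hi)] at this
    have hfine : ∀ i < n, t (i+1) - t i < δ := by
      intro i hi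
      have h1 := hball' i hi ⟨le_rfl, (hinc i hi).le⟩
      have h2 := hball' i hi ⟨(hinc i hi).le, le_rfl⟩
      rw [Metric.mem_ball, Real.dist_eq] at h1 h2
      have h1' := abs_lt.mp (lt_of_lt_of_le h1 (min_le_left _ _))
      have h2' := abs_lt.mp (lt_of_lt_of_le h2 (min_le_left _ _))
      linarith
    have hRS := hRiem n t s hn ht0 htn hinc hfine htag
    set v : ℕ → ℝ := fun i => (eVariationOn γ (Set.Icc (t i) (t (i+1)))).toReal with hvdef
    have hSI : ∑ i ∈ Finset.range n, g (γ (s i)) * v i ≤ I + ε := by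
      have := (abs_lt.mp hRS).1
      simp only [hg, hvdef] at this ⊢
      linarith
    have hIccsub : ∀ i < n, Set.Icc (t i) (t (i+1)) ⊆ Set.Icc (0:ℝ) 1 := fun i hi =>
      Set.Icc_subset_Icc (htmem i hi.le).1 (htmem (i+1) hi).2
    have hfin : ∀ u : Set ℝ, u ⊆ Set.Icc (0:ℝ) 1 → eVariationOn γ u ≠ ⊤ := fun u hu =>
      ne_top_of_le_ne_top hrect (eVariationOn.mono γ hu)
    -- per-segment estimate
    have hseg : ∀ i < n, dist (f (γ (t i))) (f (γ (t (i+1)))) ≤ (C * g (γ (s i)) + ε) * v i := by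
      intro i hi
      have hta := htag i hi
      have hballmem : ∀ u ∈ Set.Icc (t i) (t (i+1)), |u - s i| < ρ (s i) := by
        intro u hu
        have := hball' i hi hu
        rw [Metric.mem_ball, Real.dist_eq] at this
        exact lt_of_lt_of_le this (min_le_right _ _)
      have h1 : dist (f (γ (s i))) (f (γ (t i))) ≤ (C * g (γ (s i)) + ε) * dist (γ (s i)) (γ (t i)) :=
        hρ (s i) (hsmem i hi) (t i) (htmem i hi.le) (hballmem (t i) ⟨le_rfl, (hinc i hi).le⟩)
      have h2 : dist (f (γ (s i))) (f (γ (t (i+1)))) ≤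
          (C * g (γ (s i)) + ε) * dist (γ (s i)) (γ (t (i+1))) :=
        hρ (s i) (hsmem i hi) (t (i+1)) (htmem (i+1) hi) (hballmem (t (i+1)) ⟨(hinc i hi).le, le_rfl⟩)
      have hfin1 : eVariationOn γ (Set.Icc (t i) (s i)) ≠ ⊤ :=
        hfin _ ((Set.Icc_subset_Icc le_rfl hta.2).trans (hIccsub i hi))
      have hfin2 : eVariationOn γ (Set.Icc (s i) (t (i+1))) ≠ ⊤ :=
        hfin _ ((Set.Icc_subset_Icc hta.1 le_rfl).trans (hIccsub i hi))
      have hv1 : dist (γ (s i)) (γ (t i)) ≤ (eVariationOn γ (Set.Icc (t i) (s i))).toReal := by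
        rw [dist_edist]
        exact ENNReal.toReal_mono hfin1
          (eVariationOn.edist_le γ (Set.right_mem_Icc.mpr hta.1) (Set.left_mem_Icc.mpr hta.1))
      have hv2 : dist (γ (s i)) (γ (t (i+1))) ≤
          (eVariationOn γ (Set.Icc (s i) (t (i+1)))).toReal := by
        rw [dist_edist]
        exact ENNReal.toReal_mono hfin2
          (eVariationOn.edist_le γ (Set.left_mem_Icc.mpr hta.2) (Set.right_mem_Icc.mpr hta.2))
      have hadd : (eVariationOn γ (Set.Icc (t i) (s i))).toReal +
          (eVariationOn γ (Set.Icc (s i) (t (i+1)))).toReal = v i := by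
        rw [← ENNReal.toReal_add hfin1 hfin2, hvdef]
        congr 1
        have := eVariationOn.Icc_add_Icc γ (s := Set.univ) hta.1 hta.2 (Set.mem_univ _)
        simpa [Set.univ_inter] using this
      have hnn : 0 ≤ C * g (γ (s i)) + ε := by
        have : 0 < g (γ (s i)) := Real.rpow_pos_of_pos (hwpos _) _
        nlinarith
      calc dist (f (γ (t i))) (f (γ (t (i+1))))
          ≤ dist (f (γ (t i))) (f (γ (s i))) + dist (f (γ (s i))) (f (γ (t (i+1)))) :=
            dist_triangle _ _ _
        _ ≤ (C * g (γ (s i)) + ε) * dist (γ (s i)) (γ (t i)) +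
            (C * g (γ (s i)) + ε) * dist (γ (s i)) (γ (t (i+1))) := by
            rw [dist_comm (f (γ (t i)))]
            exact add_le_add h1 h2
        _ ≤ (C * g (γ (s i)) + ε) * ((eVariationOn γ (Set.Icc (t i) (s i))).toReal +
            (eVariationOn γ (Set.Icc (s i) (t (i+1)))).toReal) := by
            rw [mul_add]
            exact add_le_add (mul_le_mul_of_nonneg_left hv1 hnn) (mul_le_mul_of_nonneg_left hv2 hnn)
        _ = (C * g (γ (s i)) + ε) * v i := by rw [hadd]
    have hSv : ∑ i ∈ Finset.range n, v i = L := by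
      have h1 : ∑ i ∈ Finset.range n, v i =
          (∑ i ∈ Finset.range n, eVariationOn γ (Set.Icc (t i) (t (i+1)))).toReal :=
        (ENNReal.toReal_sum fun i hi => hfin _ (hIccsub i (Finset.mem_range.mp hi))).symm
      rw [h1, sum_eVar_aux γ t n hinc, ht0, htn]
    have hv0 : ∀ i, 0 ≤ v i := fun i => ENNReal.toReal_nonneg
    have main : dist (f x) (f y) ≤ C * (I + ε) + ε * L := by
      calc dist (f x) (f y) = dist (f (γ (t 0))) (f (γ (t n))) := by rw [ht0, htn, hγ0, hγ1]
        _ ≤ ∑ i ∈ Finset.range n, dist (f (γ (t i))) (f (γ (t (i+1)))) :=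
            dist_le_range_sum_dist (fun i => f (γ (t i))) n
        _ ≤ ∑ i ∈ Finset.range n, (C * g (γ (s i)) + ε) * v i :=
            Finset.sum_le_sum fun i hi => hseg i (Finset.mem_range.mp hi)
        _ = C * (∑ i ∈ Finset.range n, g (γ (s i)) * v i) + ε * (∑ i ∈ Finset.range n, v i) := by
            rw [Finset.mul_sum, Finset.mul_sum, ← Finset.sum_add_distrib]
            congr 1; ext i; ring
        _ ≤ C * (I + ε) + ε * L := by
            rw [hSv]
            exact add_le_add (mul_le_mul_of_nonneg_left hSI hC) le_rfl
    have hεfinal : ε * (C + L + 1) = ε' := div_mul_cancel₀ _ (by positivity)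
    nlinarith [hε.le, mul_le_mul_of_nonneg_left hI hC]
  · -- Part 2
    intro C' hC' hH z
    obtain ⟨hα0, hα1⟩ := hα
    set r := (α / 2) * w z with hr_def
    have hwz := hwpos z
    have hr : 0 < r := by positivity
    have hrw : r < w z := by nlinarith
    refine (hf.2.2 z r hr hrw).trans (ENNReal.ofReal_le_ofReal ?_)
    have hS : (⨆ y : Metric.ball z r, dist (f z) (f ↑y)) ≤ C' * r ^ α := by
      refine Real.iSup_le (fun y => ?_) (by positivity)
      refine (hH z y).trans ?_
      have hyz : dist z (y : X) ≤ r := le_of_lt (Metric.mem_ball'.mp y.2)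
      exact mul_le_mul_of_nonneg_left (Real.rpow_le_rpow dist_nonneg hyz hα0.le) hC'
    have h1 : K / r * (⨆ y : Metric.ball z r, dist (f z) (f ↑y)) ≤ K / r * (C' * r ^ α) :=
      mul_le_mul_of_nonneg_left hS (by positivity)
    refine h1.trans ?_
    have hrpow : K / r * (C' * r ^ α) = K * C' * r ^ (α - 1) := by
      rw [Real.rpow_sub hr, Real.rpow_one]
      field_simp
    rw [hrpow]
    have hsplit : r ^ (α - 1) = (α/2) ^ (α-1) * w z ^ (α-1) :=
      Real.mul_rpow (by positivity) hwz.le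
    have hb : (α/2) ^ (α-1) ≤ 2/α := by
      have h2a : (1:ℝ) ≤ 2/α := by
        rw [le_div_iff₀ hα0]; linarith
      have hinv : (α/2 : ℝ) = (2/α)⁻¹ := by field_simp
      rw [hinv, Real.inv_rpow (by positivity), ← Real.rpow_neg (by positivity)]
      calc (2/α) ^ (-(α-1)) ≤ (2/α) ^ (1:ℝ) :=
            Real.rpow_le_rpow_of_exponent_le h2a (by linarith)
        _ = 2/α := Real.rpow_one _
    have hw1 : 0 ≤ w z ^ (α - 1) := Real.rpow_nonneg hwz.le _
    calc K * C' * r ^ (α-1) = (K * C') * ((α/2)^(α-1) * w z ^ (α-1)) := by rw [hsplit]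
      _ ≤ (K * C') * ((2/α) * w z ^ (α-1)) := by
          apply mul_le_mul_of_nonneg_left _ (by positivity)
          exact mul_le_mul_of_nonneg_right hb hw1
      _ = 2 * K / α * C' * w z ^ (α-1) := by ring
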